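/- Let P be a finite connected poset and let the edge (x,y), x <_P y with x minimal and y maximal in P, not belong to any improper 4-crown of P. Then every non-extremal point m of the interval [x,y]_P satisfies: either the set of minimal points of P below m is the singleton {x}, or the set of maximal points of P above m is the singleton {y}. -/
import Mathlib


def ConnectedPoset (α : Type*) [PartialOrder α] : Prop :=
  ∀ a b : α, Relation.ReflTransGen (fun u v : α => u ≤ v ∨ v ≤ u) a b

/-- `{a,b,v,w}` is an improper 4-crown of `P`: `a,b` distinct minimal points,
`v,w` distinct maximal points, `a,b < v,w`, and some `m` with
`a,b < m < v,w`. -/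
def IsImproper4CrownE {α : Type*} [PartialOrder α] (a b v w : α) : Prop :=
  IsMin a ∧ IsMin b ∧ a ≠ b ∧ IsMax v ∧ IsMax w ∧ v ≠ w ∧
  a < v ∧ a < w ∧ b < v ∧ b < w ∧
  ∃ m : α, a < m ∧ b < m ∧ m < v ∧ m < w

/-- if the edge `(x,y)` with `x` minimal, `y` maximal does not
belong to any improper 4-crown of `P`, then every non-extremal point `m` of
`[x,y]_P` satisfies: the minimal points below `m` form exactly `{x}`, or the
maximal points above `m` form exactly `{y}`. -/
theorem stmt19 {α : Type*} [PartialOrder α] [Fintype α]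
    (hconn : ConnectedPoset α)
    (x y : α) (hx : IsMin x) (hy : IsMax y) (hxy : x < y)
    (hedge : ¬ ∃ a b v w : α, IsImproper4CrownE a b v w ∧
      (x = a ∨ x = b) ∧ (y = v ∨ y = w)) :
    ∀ m : α, x ≤ m → m ≤ y → ¬ IsMin m → ¬ IsMax m →
      ({l : α | IsMin l ∧ l ≤ m} = {x}) ∨ ({u : α | IsMax u ∧ m ≤ u} = {y}) := by
  intro m hxm hmy hmin hmax
  by_contra hcon
  push_neg at hcon
  obtain ⟨h1, h2⟩ := hcon
  -- find l minimal, l ≤ m, l ≠ x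
  have hxset : x ∈ {l : α | IsMin l ∧ l ≤ m} := ⟨hx, hxm⟩
  have hyset : y ∈ {u : α | IsMax u ∧ m ≤ u} := ⟨hy, hmy⟩
  have hl : ∃ l, (IsMin l ∧ l ≤ m) ∧ l ≠ x := by
    by_contra h
    push_neg at h
    apply h1
    apply Set.eq_singleton_iff_unique_mem.mpr
    exact ⟨hxset, fun z hz => h z hz⟩
  have hu : ∃ u, (IsMax u ∧ m ≤ u) ∧ u ≠ y := by
    by_contra h
    push_neg at h
    apply h2
    apply Set.eq_singleton_iff_unique_mem.mpr
    exact ⟨hyset, fun z hz => h z hz⟩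
  obtain ⟨l, ⟨hlmin, hlm⟩, hlx⟩ := hl
  obtain ⟨u, ⟨humax, hmu⟩, huy⟩ := hu
  have hxm' : x < m := lt_of_le_of_ne hxm (fun h => hmin (h ▸ hx))
  have hlm' : l < m := lt_of_le_of_ne hlm (fun h => hmin (h ▸ hlmin))
  have hmy' : m < y := lt_of_le_of_ne hmy (fun h => hmax (h ▸ hy))
  have hmu' : m < u := lt_of_le_of_ne hmu (fun h => hmax (h ▸ humax))
  exact hedge ⟨x, l, y, u,
    ⟨hx, hlmin, Ne.symm hlx, hy, humax, Ne.symm huy,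
      hxy, hxm'.trans hmu', hlm'.trans hmy', hlm'.trans hmu',
      m, hxm', hlm', hmy', hmu'⟩, Or.inl rfl, Or.inl rfl⟩
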